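/- Let X ∈ ℝ^{n×p} satisfy ‖XᵀX − I_p‖_F ≤ 1/6. Then XᵀX is positive definite, and the distance from X to its projection onto the Stiefel manifold satisfies ‖X − X·(XᵀX)^{−1/2}‖_F ≤ (6/11)·‖XᵀX − I_p‖_F. -/

import Mathlib

open Matrix

attribute [local instance] Matrix.frobeniusNormedAddCommGroup Matrix.frobeniusNormedSpace

namespace ExPen

noncomputable def finner {n p : ℕ} (A B : Matrix (Fin n) (Fin p) ℝ) : ℝ := (Aᵀ * B).trace

noncomputable def Phi {p : ℕ} (M : Matrix (Fin p) (Fin p) ℝ) : Matrix (Fin p) (Fin p) ℝ :=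
  (1 / 2 : ℝ) • (M + Mᵀ)

noncomputable def Amap {n p : ℕ} (X : Matrix (Fin n) (Fin p) ℝ) : Matrix (Fin p) (Fin p) ℝ :=
  (3 / 2 : ℝ) • (1 : Matrix (Fin p) (Fin p) ℝ) - (1 / 2 : ℝ) • (Xᵀ * X)

noncomputable def g {n p : ℕ} (f : Matrix (Fin n) (Fin p) ℝ → ℝ)
    (X : Matrix (Fin n) (Fin p) ℝ) : ℝ := f (X * Amap X)

noncomputable def hpen {n p : ℕ} (f : Matrix (Fin n) (Fin p) ℝ → ℝ) (β : ℝ)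
    (X : Matrix (Fin n) (Fin p) ℝ) : ℝ := g f X + β / 4 * ‖Xᵀ * X - 1‖ ^ 2

noncomputable def dualCLM {n p : ℕ} (G : Matrix (Fin n) (Fin p) ℝ) :
    Matrix (Fin n) (Fin p) ℝ →L[ℝ] ℝ :=
  LinearMap.toContinuousLinearMap
    { toFun := fun D => (Gᵀ * D).trace
      map_add' := by intro D E; simp [Matrix.mul_add]
      map_smul' := by intro c D; simp [Matrix.mul_smul] }

def HasGradAt {n p : ℕ} (φ : Matrix (Fin n) (Fin p) ℝ → ℝ)
    (X G : Matrix (Fin n) (Fin p) ℝ) : Prop :=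
  HasFDerivAt φ (dualCLM G) X

noncomputable def specNorm {n p : ℕ} (X : Matrix (Fin n) (Fin p) ℝ) : ℝ :=
  ‖LinearMap.toContinuousLinearMap
    (Matrix.toEuclideanLin X : EuclideanSpace ℝ (Fin p) →ₗ[ℝ] EuclideanSpace ℝ (Fin n))‖

lemma posSemidef_tmul {n p : ℕ} (X : Matrix (Fin n) (Fin p) ℝ) : (Xᵀ * X).PosSemidef := by
  simpa [Matrix.conjTranspose_eq_transpose_of_trivial] using
    Matrix.posSemidef_conjTranspose_mul_self X

noncomputable def Pst {n p : ℕ} (X : Matrix (Fin n) (Fin p) ℝ) : Matrix (Fin n) (Fin p) ℝ :=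
  X * ((posSemidef_tmul X).1.eigenvectorUnitary.1 *
    diagonal (fun i => Real.sqrt ((posSemidef_tmul X).1.eigenvalues i)) *
    (star (posSemidef_tmul X).1.eigenvectorUnitary : Matrix (Fin p) (Fin p) ℝ))⁻¹


noncomputable def conjU {p : ℕ} (U : Matrix (Fin p) (Fin p) ℝ) (d : Fin p → ℝ) :
    Matrix (Fin p) (Fin p) ℝ :=
  U * diagonal d * star U

variable {p : ℕ} (U : Matrix (Fin p) (Fin p) ℝ)

lemma conjU_mul (h1 : star U * U = 1) (d e : Fin p → ℝ) :
    conjU U d * conjU U e = conjU U (d * e) := by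
  calc conjU U d * conjU U e
      = U * diagonal d * ((star U * U) * (diagonal e * star U)) := by
        simp only [conjU, Matrix.mul_assoc]
    _ = U * (diagonal d * diagonal e) * star U := by
        rw [h1, one_mul]; simp only [Matrix.mul_assoc]
    _ = conjU U (d * e) := by rw [diagonal_mul_diagonal]; rfl

lemma conjU_one (h2 : U * star U = 1) : conjU U 1 = 1 := by
  have h : (diagonal 1 : Matrix (Fin p) (Fin p) ℝ) = 1 := Matrix.diagonal_one
  rw [conjU, h, mul_one, h2]

lemma conjU_sub (d e : Fin p → ℝ) : conjU U d - conjU U e = conjU U (d - e) := by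
  rw [conjU, conjU, conjU, ← Matrix.sub_mul, ← Matrix.mul_sub, diagonal_sub]
  rfl

lemma conjU_transpose (d : Fin p → ℝ) : (conjU U d)ᵀ = conjU U d := by
  have hsU : star U = Uᵀ := by
    simp [Matrix.star_eq_conjTranspose, Matrix.conjTranspose_eq_transpose_of_trivial]
  simp [conjU, hsU, Matrix.transpose_mul, Matrix.mul_assoc]

lemma conjU_trace (h1 : star U * U = 1) (d : Fin p → ℝ) :
    (conjU U d).trace = ∑ i, d i := by
  rw [conjU, Matrix.trace_mul_cycle, h1, one_mul, trace_diagonal]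

lemma conjU_posDef (h2 : U * star U = 1) (d : Fin p → ℝ)
    (hd : ∀ i, 0 < d i) : (conjU U d).PosDef := by
  refine Matrix.PosDef.of_dotProduct_mulVec_pos ?_ ?_
  · have := conjU_transpose U d
    simpa [Matrix.IsHermitian, Matrix.conjTranspose_eq_transpose_of_trivial] using this
  · intro x hx
    set y := star U *ᵥ x with hydef
    have hy : U *ᵥ y = x := by
      rw [hydef, Matrix.mulVec_mulVec, h2, Matrix.one_mulVec]
    have hyne : y ≠ 0 := by
      intro h; apply hx; rw [← hy, h, Matrix.mulVec_zero]
    have key : star x ⬝ᵥ (conjU U d) *ᵥ x = star y ⬝ᵥ (diagonal d) *ᵥ y := by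
      have hsU : star U = Uᵀ := by
        simp [Matrix.star_eq_conjTranspose, Matrix.conjTranspose_eq_transpose_of_trivial]
      have hsx : star x = x := by simp
      have hsy : star y = y := by simp
      rw [hsx, hsy, conjU, Matrix.mul_assoc, ← Matrix.mulVec_mulVec, ← Matrix.mulVec_mulVec,
        Matrix.dotProduct_mulVec x U, ← Matrix.mulVec_transpose, ← hsU, ← hydef]
    rw [key]
    exact (Matrix.PosDef.diagonal hd).dotProduct_mulVec_pos hyne

lemma norm_sq_trace {n p : ℕ} (A : Matrix (Fin n) (Fin p) ℝ) : ‖A‖ ^ 2 = (Aᵀ * A).trace := by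
  rw [Matrix.frobenius_norm_def]
  have h : (0:ℝ) ≤ ∑ i, ∑ j, ‖A i j‖ ^ (2:ℝ) := by positivity
  rw [← Real.rpow_natCast _ 2, ← Real.rpow_mul h]
  norm_num
  simp [Matrix.trace, Matrix.diag, Matrix.mul_apply, pow_two]
  rw [Finset.sum_comm]

theorem statement_14 {n p : ℕ} (X : Matrix (Fin n) (Fin p) ℝ)
    (hX : ‖Xᵀ * X - 1‖ ≤ 1 / 6) :
    (Xᵀ * X).PosDef ∧ ‖X - Pst X‖ ≤ 6 / 11 * ‖Xᵀ * X - 1‖ := by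
  have hM := posSemidef_tmul X
  have hH : (Xᵀ * X).IsHermitian := hM.1
  set U : Matrix (Fin p) (Fin p) ℝ := (hH.eigenvectorUnitary : Matrix (Fin p) (Fin p) ℝ) with hUdef
  set μ : Fin p → ℝ := hH.eigenvalues with hmu
  have h1 : star U * U = 1 := Matrix.mem_unitaryGroup_iff'.mp hH.eigenvectorUnitary.2
  have h2 : U * star U = 1 := Matrix.mem_unitaryGroup_iff.mp hH.eigenvectorUnitary.2
  have spec : Xᵀ * X = conjU U μ := by
    rw [conjU]; simpa using hH.spectral_theorem
  -- norm of M - 1 via eigenvalues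
  have hdiffM : Xᵀ * X - 1 = conjU U (μ - 1) := by
    rw [← conjU_sub, conjU_one U h2, spec]
  have hnormM : ‖Xᵀ * X - 1‖ ^ 2 = ∑ i, (μ i - 1) ^ 2 := by
    rw [norm_sq_trace, hdiffM, conjU_transpose, conjU_mul U h1, conjU_trace U h1]
    congr 1; funext i; simp [pow_two]
  -- eigenvalue bounds
  have hXsq : ‖Xᵀ * X - 1‖ ^ 2 ≤ (1/6) ^ 2 := by
    have := norm_nonneg (Xᵀ * X - 1)
    nlinarith
  have hev : ∀ i, (μ i - 1) ^ 2 ≤ (1/6) ^ 2 := by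
    intro i
    have h := Finset.single_le_sum (f := fun i => (μ i - 1)^2)
      (fun j _ => sq_nonneg _) (Finset.mem_univ i)
    rw [← hnormM] at h
    exact h.trans hXsq
  have hlb : ∀ i, 5/6 ≤ μ i := by
    intro i; nlinarith [hev i]
  have hpos : ∀ i, 0 < μ i := fun i => lt_of_lt_of_le (by norm_num) (hlb i)
  have hPD : (Xᵀ * X).PosDef := spec ▸ conjU_posDef U h2 μ hpos
  refine ⟨hPD, ?_⟩
  -- sqrt and its inverse
  set c : Fin p → ℝ := fun i => Real.sqrt (μ i) with hc
  have hcsq : ∀ i, c i ^ 2 = μ i := fun i => Real.sq_sqrt (hM.eigenvalues_nonneg i)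
  have hcpos : ∀ i, 0 < c i := fun i => Real.sqrt_pos.mpr (hpos i)
  have hsqrt : ((posSemidef_tmul X).1.eigenvectorUnitary.1 *
    diagonal (fun i => Real.sqrt ((posSemidef_tmul X).1.eigenvalues i)) *
    (star (posSemidef_tmul X).1.eigenvectorUnitary : Matrix (Fin p) (Fin p) ℝ)) = conjU U c := rfl
  have hSinv : ((posSemidef_tmul X).1.eigenvectorUnitary.1 *
    diagonal (fun i => Real.sqrt ((posSemidef_tmul X).1.eigenvalues i)) *
    (star (posSemidef_tmul X).1.eigenvectorUnitary : Matrix (Fin p) (Fin p) ℝ))⁻¹ = conjU U (fun i => (c i)⁻¹) := by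
    apply Matrix.inv_eq_right_inv
    rw [hsqrt, conjU_mul U h1]
    have he : (c * fun i => (c i)⁻¹) = 1 := funext fun i => mul_inv_cancel₀ (hcpos i).ne'
    rw [he, conjU_one U h2]
  set e : Fin p → ℝ := fun i => 1 - (c i)⁻¹ with hedef
  have hdiff : X - Pst X = X * conjU U e := by
    calc X - Pst X = X * (conjU U 1 - conjU U (fun i => (c i)⁻¹)) := by
          rw [Matrix.mul_sub, conjU_one U h2, Matrix.mul_one, Pst, hSinv]
      _ = X * conjU U e := by rw [conjU_sub]; rfl
  have hnormD : ‖X - Pst X‖ ^ 2 = ∑ i, (c i - 1) ^ 2 := by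
    rw [hdiff, norm_sq_trace, Matrix.transpose_mul, conjU_transpose,
      Matrix.mul_assoc (conjU U e) Xᵀ (X * conjU U e),
      show Xᵀ * (X * conjU U e) = conjU U μ * conjU U e by
        rw [← Matrix.mul_assoc, spec],
      conjU_mul U h1, conjU_mul U h1, conjU_trace U h1]
    congr 1; funext i
    have hne : c i ≠ 0 := (hcpos i).ne'
    show e i * (μ i * e i) = (c i - 1)^2
    rw [← hcsq i, hedef]
    field_simp
  have hsum : ∑ i, (c i - 1) ^ 2 ≤ (6/11)^2 * ∑ i, (μ i - 1) ^ 2 := by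
    rw [Finset.mul_sum]
    apply Finset.sum_le_sum
    intro i _
    have hs : 5/6 ≤ c i := by nlinarith [hcsq i, hlb i, (hcpos i).le]
    have h36 : (0:ℝ) ≤ 36*(c i + 1)^2 - 121 := by nlinarith
    have := mul_nonneg (sq_nonneg (c i - 1)) h36
    nlinarith [hcsq i]
  have hfin : ‖X - Pst X‖ ^ 2 ≤ (6/11 * ‖Xᵀ * X - 1‖) ^ 2 := by
    rw [hnormD, mul_pow, hnormM]
    exact hsum
  have hb : 0 ≤ 6/11 * ‖Xᵀ * X - 1‖ := by positivity
  nlinarith [norm_nonneg (X - Pst X), hfin, hb]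



end ExPen
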